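/- The ring $\mathbb{Z}$ satisfies the approximation condition: for any $\epsilon > 0$, any non-trivial compatible family $(\phi_p)_{p \in \mathbb{Z}\setminus\{0\}}$ of characters of $\mathbb{Z}$ (i.e. $\phi_q((q/p)x) = \phi_p(x)$ when $p \mid q$, not all trivial), any character $\pi$ of $\mathbb{Z}$, any nonzero $P \in \mathbb{Z}$, and any $r_1, \dots, r_n \in \mathbb{Z}$, there exist nonzero $p, q \in \mathbb{Z}$ with $P \mid p$ such that $|\phi_p(q r_i) - \pi(r_i)| < \epsilon$ for all $i$. -/

import Mathlib

private lemma aux_abs_pow_sub_pow (a b : ℂ) (ha : ‖a‖ = 1) (hb : ‖b‖ = 1)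
    (k : ℕ) : ‖a ^ k - b ^ k‖ ≤ k * ‖a - b‖ := by
  induction k with
  | zero => simp
  | succ k ih =>
    have h : a ^ (k + 1) - b ^ (k + 1) = a ^ k * (a - b) + (a ^ k - b ^ k) * b := by ring
    calc ‖a ^ (k + 1) - b ^ (k + 1)‖
        ≤ ‖a ^ k * (a - b)‖ + ‖(a ^ k - b ^ k) * b‖ := by
          rw [h]; exact norm_add_le _ _
      _ = ‖a - b‖ + ‖a ^ k - b ^ k‖ := by
          rw [norm_mul, norm_mul, norm_pow, ha, hb, one_pow, one_mul, mul_one]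
      _ ≤ ‖a - b‖ + k * ‖a - b‖ := by linarith
      _ = (k + 1 : ℕ) * ‖a - b‖ := by push_cast; ring

private lemma aux_abs_zpow_sub_zpow (a b : ℂ) (ha : ‖a‖ = 1) (hb : ‖b‖ = 1)
    (k : ℤ) : ‖a ^ k - b ^ k‖ ≤ |(k : ℝ)| * ‖a - b‖ := by
  have ha0 : a ≠ 0 := by intro h; rw [h] at ha; simp at ha
  have hb0 : b ≠ 0 := by intro h; rw [h] at hb; simp at hb
  obtain ⟨n, hn | hn⟩ := k.eq_nat_or_neg
  · subst hn
    simp only [Int.cast_natCast, Nat.abs_cast]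
    rw [zpow_natCast, zpow_natCast]
    exact aux_abs_pow_sub_pow a b ha hb n
  · subst hn
    simp only [Int.cast_neg, Int.cast_natCast, abs_neg, Nat.abs_cast]
    rw [zpow_neg, zpow_neg, zpow_natCast, zpow_natCast,
      inv_sub_inv (pow_ne_zero n ha0) (pow_ne_zero n hb0), norm_div, norm_mul, norm_pow, norm_pow,
      ha, hb]
    simp only [one_pow, mul_one, one_mul, div_one]
    rw [← neg_sub, norm_neg]
    exact aux_abs_pow_sub_pow a b ha hb n

private lemma aux_char_zpow (f : ℤ → ℂ) (habs : ∀ x, ‖f x‖ = 1)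
    (hchar : ∀ x y, f (x + y) = f x * f y) : ∀ x : ℤ, f x = f 1 ^ x := by
  have hne : ∀ x, f x ≠ 0 := by
    intro x h
    have := habs x; rw [h] at this; simp at this
  have hf0 : f 0 = 1 := by
    have h := hchar 0 0
    simp only [add_zero] at h
    nth_rewrite 1 [← mul_one (f 0)] at h
    exact (mul_left_cancel₀ (hne 0) h).symm
  intro x
  induction x using Int.induction_on with
  | zero => simpa using hf0
  | succ n ih =>
    have h := hchar n 1
    rw [ih] at h
    rw [h, ← zpow_add_one₀ (hne 1)]
  | pred n ih =>
    have h := hchar (-(n : ℤ) - 1) 1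
    rw [sub_add_cancel] at h
    have h2 : f (-(n : ℤ) - 1) = f (-(n : ℤ)) * (f 1)⁻¹ :=
      (eq_mul_inv_iff_mul_eq₀ (hne 1)).mpr h.symm
    rw [h2, ih, ← zpow_sub_one₀ (hne 1)]

private lemma aux_exp_lip (x y : ℝ) :
    ‖Complex.exp (x * Complex.I) - Complex.exp (y * Complex.I)‖ ≤ 2 * |x - y| := by
  have hy : ‖Complex.exp ((y : ℂ) * Complex.I)‖ = 1 := by
    rw [Complex.norm_exp]; simp
  have hx' : ‖Complex.exp (((x - y : ℝ) : ℂ) * Complex.I)‖ = 1 := by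
    rw [Complex.norm_exp]; simp
  have hfact : Complex.exp ((x : ℂ) * Complex.I) - Complex.exp ((y : ℂ) * Complex.I)
      = Complex.exp ((y : ℂ) * Complex.I) * (Complex.exp (((x - y : ℝ) : ℂ) * Complex.I) - 1) := by
    rw [mul_sub, ← Complex.exp_add, mul_one]
    push_cast
    ring_nf
  rw [hfact, norm_mul, hy, one_mul]
  have habsI : ‖((x - y : ℝ) : ℂ) * Complex.I‖ = |x - y| := by
    rw [norm_mul, Complex.norm_I, Complex.norm_real, Real.norm_eq_abs, mul_one]
  by_cases h : |x - y| ≤ 1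
  · have := Complex.norm_exp_sub_one_le (x := ((x - y : ℝ) : ℂ) * Complex.I) (by rw [habsI]; exact h)
    rwa [habsI] at this
  · push_neg at h
    have h1 : ‖Complex.exp (((x - y : ℝ) : ℂ) * Complex.I) - 1‖
        ≤ ‖Complex.exp (((x - y : ℝ) : ℂ) * Complex.I)‖ + ‖(1 : ℂ)‖ := by
      simpa using norm_sub_le (Complex.exp (((x - y : ℝ) : ℂ) * Complex.I)) 1
    rw [hx'] at h1
    simp only [norm_one] at h1
    linarith

private lemma aux_exp_ne_one {t : ℝ} (h0 : 0 < t) (h2 : t < 2 * Real.pi) :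
    Complex.exp ((t : ℂ) * Complex.I) ≠ 1 := by
  intro h
  rw [Complex.exp_eq_one_iff] at h
  obtain ⟨n, hn⟩ := h
  have hc : (t : ℂ) * Complex.I = ((n : ℂ) * (2 * (Real.pi : ℂ))) * Complex.I := by
    rw [hn]; ring
  have hR : t = (n : ℝ) * (2 * Real.pi) := by
    have := mul_right_cancel₀ Complex.I_ne_zero hc
    exact_mod_cast this
  have hπ := Real.pi_pos
  rcases le_or_gt (n : ℝ) 0 with hle | hlt
  · nlinarith
  · have : (1 : ℝ) ≤ (n : ℝ) := by exact_mod_cast (by exact_mod_cast hlt : 0 < n)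
    nlinarith

theorem stmt16 (ε : ℝ) (hε : 0 < ε)
    (φ : {p : ℤ // p ≠ 0} → ℤ → ℂ)
    (habs : ∀ p x, ‖φ p x‖ = 1)
    (hchar : ∀ p x y, φ p (x + y) = φ p x * φ p y)
    (hcompat : ∀ (p q : {p : ℤ // p ≠ 0}) (c : ℤ), c * (p : ℤ) = (q : ℤ) →
      ∀ x, φ q (c * x) = φ p x)
    (hnontriv : ∃ p x, φ p x ≠ 1)
    (π : ℤ → ℂ) (hπabs : ∀ x, ‖π x‖ = 1)
    (hπchar : ∀ x y, π (x + y) = π x * π y)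
    (P : ℤ) (hP : P ≠ 0) (n : ℕ) (r : Fin n → ℤ) :
    ∃ (p q : ℤ) (hp : p ≠ 0), q ≠ 0 ∧ P ∣ p ∧
      ∀ i, ‖φ ⟨p, hp⟩ (q * r i) - π (r i)‖ < ε := by
  obtain ⟨p₀, x₀, hx₀⟩ := hnontriv
  have hφne : ∀ p (x : ℤ), φ p x ≠ 0 := by
    intro p x h
    have := habs p x; rw [h] at this; simp at this
  have hzpow : ∀ p (x : ℤ), φ p x = φ p 1 ^ x := fun p => aux_char_zpow (φ p) (habs p) (hchar p)
  have hZp₀ : φ p₀ 1 ≠ 1 := by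
    intro h; exact hx₀ (by rw [hzpow p₀ x₀, h, one_zpow])
  have hN₀ : P * (p₀ : ℤ) ≠ 0 := mul_ne_zero hP p₀.2
  set N : {p : ℤ // p ≠ 0} := ⟨P * (p₀ : ℤ), hN₀⟩ with hN
  set S : ℕ → {p : ℤ // p ≠ 0} :=
    fun m => ⟨P * (p₀ : ℤ) * ((m : ℤ) + 1), mul_ne_zero hN₀ (by omega)⟩ with hS
  -- basic relations
  have hζP : φ N 1 ^ (P : ℤ) = φ p₀ 1 := by
    have h := hcompat p₀ N P rfl 1
    rw [mul_one] at h
    rw [← h, hzpow _ P]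
  have hζ1 : φ N 1 ≠ 1 := by
    intro h; exact hZp₀ (by rw [← hζP, h, one_zpow])
  have hξζ : ∀ m : ℕ, φ (S m) 1 ^ ((m : ℤ) + 1) = φ N 1 := by
    intro m
    have h := hcompat N (S m) ((m : ℤ) + 1) (by simp only [hS, hN]; ring) 1
    rw [mul_one] at h
    rw [← h, hzpow _ ((m : ℤ) + 1)]
  have hξrel : ∀ m m' : ℕ, φ (S (m * m' + m + m')) 1 ^ ((m' : ℤ) + 1) = φ (S m) 1 := by
    intro m m'
    have h := hcompat (S m) (S (m * m' + m + m')) ((m' : ℤ) + 1)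
      (by simp only [hS]; push_cast; ring) 1
    rw [mul_one] at h
    rw [← h, hzpow _ ((m' : ℤ) + 1)]
  -- the union of cyclic groups
  set U : Set ℂ := {z | ∃ (m : ℕ) (q : ℤ), z = φ (S m) 1 ^ q} with hU
  have hone : (1 : ℂ) ∈ U := ⟨0, 0, (zpow_zero _).symm⟩
  have hUmul : ∀ z w : ℂ, z ∈ U → w ∈ U → z * w ∈ U := by
    rintro z w ⟨m, q, rfl⟩ ⟨m', q', rfl⟩
    refine ⟨m * m' + m + m', ((m' : ℤ) + 1) * q + ((m : ℤ) + 1) * q', ?_⟩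
    have h1 : φ (S (m * m' + m + m')) 1 ^ ((m' : ℤ) + 1) = φ (S m) 1 := hξrel m m'
    have h2 : φ (S (m * m' + m + m')) 1 ^ ((m : ℤ) + 1) = φ (S m') 1 := by
      have h := hξrel m' m
      rwa [show m' * m + m' + m = m * m' + m + m' by ring] at h
    rw [zpow_add₀ (hφne _ _), zpow_mul, zpow_mul, h1, h2]
  have hUabs : ∀ z ∈ U, ‖z‖ = 1 := by
    rintro z ⟨m, q, rfl⟩
    rw [norm_zpow, habs, one_zpow]
  -- the additive subgroup of ℝ
  set A : AddSubgroup ℝ :=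
    { carrier := {t : ℝ | Complex.exp ((t : ℂ) * Complex.I) ∈ U}
      zero_mem' := by
        simp only [Set.mem_setOf_eq, Complex.ofReal_zero, zero_mul, Complex.exp_zero]
        exact hone
      add_mem' := by
        intro s t hs ht
        simp only [Set.mem_setOf_eq] at *
        rw [Complex.ofReal_add, add_mul, Complex.exp_add]
        exact hUmul _ _ hs ht
      neg_mem' := by
        intro s hs
        simp only [Set.mem_setOf_eq] at *
        obtain ⟨m, q, hq⟩ := hs
        refine ⟨m, -q, ?_⟩
        rw [Complex.ofReal_neg, neg_mul, Complex.exp_neg, hq, ← zpow_neg] } with hA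
  have hAmem : ∀ t : ℝ, t ∈ A ↔ Complex.exp ((t : ℂ) * Complex.I) ∈ U := fun t => Iff.rfl
  have hexp_of_mem : ∀ z ∈ U, Complex.exp ((Complex.arg z : ℂ) * Complex.I) = z := by
    intro z hz
    have h := Complex.norm_mul_exp_arg_mul_I z
    rwa [hUabs z hz, Complex.ofReal_one, one_mul] at h
  have hUarg : ∀ z ∈ U, Complex.arg z ∈ A := by
    intro z hz
    rw [hAmem, hexp_of_mem z hz]
    exact hz
  -- density
  have hπpos := Real.pi_pos
  have hdense : Dense (A : Set ℝ) := by
    rcases A.dense_or_cyclic with h | ⟨a, ha⟩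
    · exact h
    · exfalso
      have h2π : (2 * Real.pi) ∈ A := by
        rw [hAmem]
        have : Complex.exp (((2 * Real.pi : ℝ) : ℂ) * Complex.I) = 1 := by
          push_cast
          exact Complex.exp_two_pi_mul_I
        rw [this]; exact hone
      rw [ha, AddSubgroup.mem_closure_singleton] at h2π
      obtain ⟨k, hk⟩ := h2π
      have hk' : (k : ℝ) * a = 2 * Real.pi := by
        rw [← hk]; simp [zsmul_eq_mul]
      have hk0 : k ≠ 0 := by
        rintro rfl; simp at hk'
      have hkabs : 1 ≤ k.natAbs := Int.natAbs_pos.mpr hk0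
      set u : ℂ := φ (S (k.natAbs - 1)) 1 with hu
      have huU : u ∈ U := ⟨k.natAbs - 1, 1, (zpow_one _).symm⟩
      have huA := hUarg u huU
      rw [ha, AddSubgroup.mem_closure_singleton] at huA
      obtain ⟨j, hj⟩ := huA
      have hj' : (j : ℝ) * a = Complex.arg u := by
        rw [← hj]; simp [zsmul_eq_mul]
      have hnarg : (k : ℝ) * Complex.arg u = (j : ℝ) * (2 * Real.pi) := by
        calc (k : ℝ) * Complex.arg u = (j : ℝ) * ((k : ℝ) * a) := by rw [← hj']; ring
          _ = (j : ℝ) * (2 * Real.pi) := by rw [hk']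
      have hun : u ^ k = 1 := by
        rw [← hexp_of_mem u huU, ← Complex.exp_int_mul]
        have heq : (k : ℂ) * ((Complex.arg u : ℂ) * Complex.I)
            = (j : ℂ) * (2 * (Real.pi : ℂ) * Complex.I) := by
          have : (((k : ℝ) * Complex.arg u : ℝ) : ℂ) = (((j : ℝ) * (2 * Real.pi) : ℝ) : ℂ) := by
            exact_mod_cast congrArg (fun x : ℝ => (x : ℂ)) hnarg
          push_cast at this ⊢
          linear_combination Complex.I * this
        rw [heq, Complex.exp_int_mul, Complex.exp_two_pi_mul_I, one_zpow]
      have hunat : u ^ (k.natAbs : ℤ) = 1 := by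
        rcases Int.natAbs_eq k with h | h
        · rw [← h, hun]
        · have : u ^ (-(k.natAbs : ℤ)) = 1 := by rw [← h, hun]
          rw [zpow_neg] at this
          rw [← inv_inv (u ^ (k.natAbs : ℤ)), this, inv_one]
      have : φ N 1 = 1 := by
        rw [← hξζ (k.natAbs - 1)]
        have hcast : ((k.natAbs - 1 : ℕ) : ℤ) + 1 = (k.natAbs : ℤ) := by omega
        rw [hcast, ← hu, hunat]
      exact hζ1 this
  -- key approximation
  have key : ∀ w : ℂ, ‖w‖ = 1 → ∀ δ : ℝ, 0 < δ →
      ∃ (m : ℕ) (q : ℤ), q ≠ 0 ∧ ‖φ (S m) 1 ^ q - w‖ < δ := by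
    intro w hw δ hδ
    -- nontrivial element near 1
    obtain ⟨t₁, ht₁A, ht₁mem⟩ := hdense.exists_between
      (show (0 : ℝ) < min (δ / 8) 1 by positivity)
    obtain ⟨ht₁0, ht₁u⟩ := ht₁mem
    have ht₁δ : t₁ < δ / 8 := lt_of_lt_of_le ht₁u (min_le_left _ _)
    have ht₁1 : t₁ < 1 := lt_of_lt_of_le ht₁u (min_le_right _ _)
    obtain ⟨m₁, q₁, hq₁⟩ := (hAmem t₁).mp ht₁A
    have hne1 : Complex.exp ((t₁ : ℂ) * Complex.I) ≠ 1 :=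
      aux_exp_ne_one ht₁0 (by nlinarith [Real.pi_gt_three])
    have hq₁0 : q₁ ≠ 0 := by
      rintro rfl
      rw [zpow_zero] at hq₁
      exact hne1 hq₁
    have h1close : ‖φ (S m₁) 1 ^ q₁ - 1‖ < δ / 4 := by
      have h := aux_exp_lip t₁ 0
      rw [Complex.ofReal_zero, zero_mul, Complex.exp_zero, sub_zero] at h
      rw [← hq₁]
      calc ‖Complex.exp ((t₁ : ℂ) * Complex.I) - 1‖ ≤ 2 * |t₁| := h
        _ = 2 * t₁ := by rw [abs_of_pos ht₁0]
        _ < δ / 4 := by linarith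
    -- element near w
    obtain ⟨t₂, ht₂A, ht₂mem⟩ := hdense.exists_between
      (show Complex.arg w < Complex.arg w + δ / 8 by linarith)
    obtain ⟨ht₂0, ht₂u⟩ := ht₂mem
    obtain ⟨m₂, q₂, hq₂⟩ := (hAmem t₂).mp ht₂A
    have hwexp : Complex.exp ((Complex.arg w : ℂ) * Complex.I) = w := by
      have h := Complex.norm_mul_exp_arg_mul_I w
      rwa [hw, Complex.ofReal_one, one_mul] at h
    have h2close : ‖φ (S m₂) 1 ^ q₂ - w‖ < δ / 4 := by
      rw [← hq₂, ← hwexp]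
      calc ‖Complex.exp ((t₂ : ℂ) * Complex.I)
            - Complex.exp ((Complex.arg w : ℂ) * Complex.I)‖
          ≤ 2 * |t₂ - Complex.arg w| := aux_exp_lip t₂ (Complex.arg w)
        _ < δ / 4 := by rw [abs_of_pos (by linarith)]; linarith
    by_cases hq₂0 : q₂ = 0
    · refine ⟨m₁, q₁, hq₁0, ?_⟩
      rw [hq₂0, zpow_zero] at h2close
      calc ‖φ (S m₁) 1 ^ q₁ - w‖
          ≤ ‖φ (S m₁) 1 ^ q₁ - 1‖ + ‖1 - w‖ :=
            norm_sub_le_norm_sub_add_norm_sub _ 1 _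
        _ < δ / 4 + δ / 4 := by linarith
        _ ≤ δ := by linarith
    · exact ⟨m₂, q₂, hq₂0, by linarith⟩
  -- assemble
  have hπzpow : ∀ x : ℤ, π x = π 1 ^ x := aux_char_zpow π hπabs hπchar
  have hwabs : ‖π 1‖ = 1 := hπabs 1
  set R : ℝ := 1 + ∑ i, |(r i : ℝ)| with hR
  have hRpos : 0 < R := by
    have : (0 : ℝ) ≤ ∑ i, |(r i : ℝ)| := Finset.sum_nonneg fun i _ => abs_nonneg _
    rw [hR]; linarith
  have hRI : ∀ i, |(r i : ℝ)| ≤ R := by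
    intro i
    have h := Finset.single_le_sum (f := fun j => |(r j : ℝ)|)
      (fun j _ => abs_nonneg _) (Finset.mem_univ i)
    rw [hR]; linarith
  obtain ⟨m, q, hq0, hclose⟩ := key (π 1) hwabs (ε / R) (by positivity)
  refine ⟨(S m : ℤ), q, (S m).2, hq0, ⟨(p₀ : ℤ) * ((m : ℤ) + 1), by simp only [hS]; ring⟩, ?_⟩
  intro i
  have hsub : (⟨(S m : ℤ), (S m).2⟩ : {p : ℤ // p ≠ 0}) = S m := rfl
  have h1 : φ ⟨(S m : ℤ), (S m).2⟩ (q * r i) = (φ (S m) 1 ^ q) ^ (r i) := by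
    rw [hsub, hzpow _ (q * r i), zpow_mul]
  rw [h1, hπzpow (r i)]
  have habs1 : ‖φ (S m) 1 ^ q‖ = 1 := by rw [norm_zpow, habs, one_zpow]
  calc ‖(φ (S m) 1 ^ q) ^ r i - π 1 ^ r i‖
      ≤ |((r i : ℤ) : ℝ)| * ‖φ (S m) 1 ^ q - π 1‖ :=
        aux_abs_zpow_sub_zpow _ _ habs1 hwabs (r i)
    _ ≤ R * ‖φ (S m) 1 ^ q - π 1‖ :=
        mul_le_mul_of_nonneg_right (hRI i) (norm_nonneg _)
    _ < R * (ε / R) := mul_lt_mul_of_pos_left hclose hRpos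
    _ = ε := by field_simp
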